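/- Let k ≥ 1 be an integer and define g : {(x,y) ∈ ℝ² : 0 < x² + y² < 1} → ℝ by g(x,y) := ∫₀^{artanh((1−x²−y²)/(1+x²+y²))} sinh(θ)^{2k−2} dθ. Then for every (x,y) with 0 < x²+y² < 1, writing z := x + iy, (1/2)·( (∂g/∂x)(x,y) − i·(∂g/∂y)(x,y) ) = −(x²+y²−1)^{2k−2} / (2^{2k−1} · z^k · conj(z)^{k−1}). -/

import Mathlib

/-- The real inverse hyperbolic tangent, `artanh x = (1/2) log((1+x)/(1−x))`. -/
noncomputable def artanh (x : ℝ) : ℝ := (1 / 2) * Real.log ((1 + x) / (1 - x))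

/-- The function `g(x,y) = ∫₀^{artanh((1−x²−y²)/(1+x²+y²))} sinh(θ)^{2k−2} dθ`. -/
noncomputable def gfun (k : ℕ) (x y : ℝ) : ℝ :=
  ∫ θ in (0:ℝ)..artanh ((1 - x ^ 2 - y ^ 2) / (1 + x ^ 2 + y ^ 2)), Real.sinh θ ^ (2 * k - 2)

lemma artanh_eq (s : ℝ) (h0 : 0 < s) (h1 : s < 1) :
    artanh ((1 - s) / (1 + s)) = -(1/2) * Real.log s := by
  have h2 : (0:ℝ) < 1 + s := by linarith
  have key : (1 + (1 - s) / (1 + s)) / (1 - (1 - s) / (1 + s)) = 1 / s := by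
    field_simp
    ring_nf
    exact mul_inv_cancel₀ h0.ne'
  rw [artanh, key, Real.log_div one_ne_zero h0.ne', Real.log_one]
  ring

lemma sinh_val (s : ℝ) (h0 : 0 < s) :
    Real.sinh (-(1/2) * Real.log s) = (1 - s) / (2 * Real.sqrt s) := by
  have hs : Real.sqrt s > 0 := Real.sqrt_pos.mpr h0
  have hl : (1/2 : ℝ) * Real.log s = Real.log (Real.sqrt s) := by
    rw [Real.log_sqrt h0.le]; ring
  have h1 : Real.exp (-(1/2) * Real.log s) = (Real.sqrt s)⁻¹ := by
    rw [show -(1/2) * Real.log s = -((1/2) * Real.log s) by ring, Real.exp_neg, hl,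
      Real.exp_log hs]
  have h2 : Real.exp (-(-(1/2) * Real.log s)) = Real.sqrt s := by
    rw [show -(-(1/2) * Real.log s) = (1/2) * Real.log s by ring, hl, Real.exp_log hs]
  have h3 : Real.sqrt s * Real.sqrt s = s := Real.mul_self_sqrt h0.le
  rw [Real.sinh_eq, h1, h2]
  rw [div_eq_div_iff (by norm_num) (by positivity)]
  field_simp
  nlinarith [h3]

lemma aux_deriv (n : ℕ) (c : ℝ → ℝ) (t c' : ℝ) (hc : HasDerivAt c c' t)
    (hcont : Continuous c) (h0 : 0 < c t) (h1 : c t < 1) :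
    HasDerivAt (fun t' => ∫ θ in (0:ℝ)..artanh ((1 - c t') / (1 + c t')), Real.sinh θ ^ n)
      (((1 - c t) / (2 * Real.sqrt (c t))) ^ n * (-(1/2) * (c' / c t))) t := by
  have hF : ∀ b : ℝ, HasDerivAt (fun u => ∫ θ in (0:ℝ)..u, Real.sinh θ ^ n)
      (Real.sinh b ^ n) b := fun b =>
    ((Real.continuous_sinh.pow n).integral_hasStrictDerivAt 0 b).hasDerivAt
  have hlog : HasDerivAt (fun t' => -(1/2) * Real.log (c t')) (-(1/2) * (c' / c t)) t :=
    (hc.log h0.ne').const_mul (-(1/2))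
  have hcomp : HasDerivAt (fun t' => ∫ θ in (0:ℝ)..(-(1/2) * Real.log (c t')), Real.sinh θ ^ n)
      (Real.sinh (-(1/2) * Real.log (c t)) ^ n * (-(1/2) * (c' / c t))) t :=
    (hF _).comp t hlog
  rw [sinh_val _ h0] at hcomp
  apply hcomp.congr_of_eventuallyEq
  have hev : ∀ᶠ t' in nhds t, 0 < c t' ∧ c t' < 1 := by
    have : Set.Ioo (0:ℝ) 1 ∈ nhds (c t) := Ioo_mem_nhds h0 h1
    exact (hcont.continuousAt (x := t)).eventually_mem this
  filter_upwards [hev] with t' ht'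
  rw [artanh_eq _ ht'.1 ht'.2]

/-- For an integer `k ≥ 1` and `(x,y)` with `0 < x² + y² < 1`, writing
`z = x + iy`, the Wirtinger derivative satisfies
`(1/2)(∂g/∂x − i ∂g/∂y) = −(x²+y²−1)^{2k−2}/(2^{2k−1} z^k conj(z)^{k−1})`. -/
theorem stmt_14 (k : ℕ) (hk : 1 ≤ k) (x y : ℝ) (h0 : 0 < x ^ 2 + y ^ 2)
    (h1 : x ^ 2 + y ^ 2 < 1) :
    (1 / 2 : ℂ) * (((deriv (fun x' : ℝ => gfun k x' y) x : ℝ) : ℂ)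
        - Complex.I * ((deriv (fun y' : ℝ => gfun k x y') y : ℝ) : ℂ))
      = -(((x ^ 2 + y ^ 2 - 1 : ℝ) : ℂ) ^ (2 * k - 2))
          / (2 ^ (2 * k - 1) * ((x : ℂ) + (y : ℂ) * Complex.I) ^ k
              * (starRingEnd ℂ) ((x : ℂ) + (y : ℂ) * Complex.I) ^ (k - 1)) := by
  obtain ⟨m, rfl⟩ := Nat.exists_eq_add_of_le hk
  have hcx : HasDerivAt (fun x' : ℝ => x' ^ 2 + y ^ 2) (2 * x) x := by
    simpa using (hasDerivAt_pow 2 x).add_const (y ^ 2)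
  have hcy : HasDerivAt (fun y' : ℝ => x ^ 2 + y' ^ 2) (2 * y) y := by
    simpa using ((hasDerivAt_pow 2 y).const_add (x ^ 2))
  have hcontx : Continuous (fun x' : ℝ => x' ^ 2 + y ^ 2) := by continuity
  have hconty : Continuous (fun y' : ℝ => x ^ 2 + y' ^ 2) := by continuity
  have hdx := aux_deriv (2 * (1 + m) - 2) _ x (2 * x) hcx hcontx h0 h1
  have hdy := aux_deriv (2 * (1 + m) - 2) _ y (2 * y) hcy hconty h0 h1
  have hgx : (fun x' : ℝ => gfun (1 + m) x' y) =
      fun x' : ℝ => ∫ θ in (0:ℝ)..artanh ((1 - (x' ^ 2 + y ^ 2)) / (1 + (x' ^ 2 + y ^ 2))),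
        Real.sinh θ ^ (2 * (1 + m) - 2) := by
    funext x'
    simp only [gfun, sub_sub, add_assoc]
  have hgy : (fun y' : ℝ => gfun (1 + m) x y') =
      fun y' : ℝ => ∫ θ in (0:ℝ)..artanh ((1 - (x ^ 2 + y' ^ 2)) / (1 + (x ^ 2 + y' ^ 2))),
        Real.sinh θ ^ (2 * (1 + m) - 2) := by
    funext y'
    simp only [gfun, sub_sub, add_assoc]
  rw [hgx, hgy, hdx.deriv, hdy.deriv]
  have e1 : 2 * (1 + m) - 2 = 2 * m := by omega
  have e2 : 2 * (1 + m) - 1 = 2 * m + 1 := by omega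
  have e3 : 1 + m - 1 = m := by omega
  rw [e1, e2, e3]
  have hsq : Real.sqrt (x ^ 2 + y ^ 2) ^ 2 = x ^ 2 + y ^ 2 := Real.sq_sqrt h0.le
  have hpow : ((1 - (x ^ 2 + y ^ 2)) / (2 * Real.sqrt (x ^ 2 + y ^ 2))) ^ (2 * m)
      = (1 - (x ^ 2 + y ^ 2)) ^ (2 * m) / (2 ^ (2 * m) * (x ^ 2 + y ^ 2) ^ m) := by
    rw [div_pow, mul_pow, pow_mul (Real.sqrt (x ^ 2 + y ^ 2)), hsq]
  rw [hpow]
  have hZW : ((x:ℂ) ^ 2 + (y:ℂ) ^ 2)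
      = ((x:ℂ) + y * Complex.I) * ((x:ℂ) - y * Complex.I) := by
    linear_combination ((y:ℂ) ^ 2) * Complex.I_sq
  have hsne : ((x:ℂ) ^ 2 + (y:ℂ) ^ 2) ≠ 0 := by
    intro h
    have : ((x ^ 2 + y ^ 2 : ℝ) : ℂ) = 0 := by push_cast; exact h
    exact h0.ne' (by exact_mod_cast this)
  have hZ : ((x:ℂ) + y * Complex.I) ≠ 0 := by
    intro h
    rw [hZW, h, zero_mul] at hsne
    exact hsne rfl
  have hW : ((x:ℂ) - y * Complex.I) ≠ 0 := by
    intro h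
    rw [hZW, h, mul_zero] at hsne
    exact hsne rfl
  have hconj : (starRingEnd ℂ) ((x : ℂ) + (y : ℂ) * Complex.I) = (x:ℂ) - y * Complex.I := by
    rw [map_add, map_mul, Complex.conj_ofReal, Complex.conj_ofReal, Complex.conj_I]
    ring
  have hflip : (((x ^ 2 + y ^ 2 - 1 : ℝ) : ℂ)) ^ (2 * m)
      = ((1 - (x ^ 2 + y ^ 2) : ℝ) : ℂ) ^ (2 * m) := by
    rw [show ((x ^ 2 + y ^ 2 - 1 : ℝ) : ℂ) = -(((1 - (x ^ 2 + y ^ 2) : ℝ)) : ℂ) by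
      push_cast; ring]
    rw [neg_pow, Even.neg_one_pow (even_two_mul m), one_mul]
  rw [hconj, hflip]
  -- abbreviations
  have hC : ∀ t : ℝ,
      ((((1 - (x ^ 2 + y ^ 2)) ^ (2 * m) / (2 ^ (2 * m) * (x ^ 2 + y ^ 2) ^ m)
        * (-(1/2) * (2 * t / (x ^ 2 + y ^ 2))) : ℝ)) : ℂ)
      = ((1 - (x ^ 2 + y ^ 2) : ℝ) : ℂ) ^ (2 * m) * (-(t:ℂ))
          / (2 ^ (2 * m) * ((x:ℂ) ^ 2 + (y:ℂ) ^ 2) ^ m * ((x:ℂ) ^ 2 + (y:ℂ) ^ 2)) := by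
    intro t
    have hsm : (((x:ℂ) ^ 2 + (y:ℂ) ^ 2) ^ m) ≠ 0 := pow_ne_zero _ hsne
    push_cast
    field_simp
  rw [hC x, hC y]
  have hsm : (((x:ℂ) ^ 2 + (y:ℂ) ^ 2) ^ m) ≠ 0 := pow_ne_zero _ hsne
  have hL : ∀ S C X Y : ℂ, S ≠ 0 →
      (1 / 2 : ℂ) * (C * (-X) / (2 ^ (2 * m) * S ^ m * S)
          - Complex.I * (C * (-Y) / (2 ^ (2 * m) * S ^ m * S)))
      = -(C * (X - Complex.I * Y)) / (2 ^ (2 * m + 1) * (S ^ m * S)) := by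
    intro S C X Y hS
    have hSm : S ^ m ≠ 0 := pow_ne_zero _ hS
    rw [show (1 / 2 : ℂ) * (C * (-X) / (2 ^ (2 * m) * S ^ m * S)
          - Complex.I * (C * (-Y) / (2 ^ (2 * m) * S ^ m * S)))
        = (-(C * (X - Complex.I * Y))) / (2 * (2 ^ (2 * m) * S ^ m * S)) from by ring]
    rw [show (2:ℂ) ^ (2 * m + 1) * (S ^ m * S) = 2 * (2 ^ (2 * m) * S ^ m * S) from by ring]
  rw [hL _ _ _ _ hsne, hZW]
  rw [show (x:ℂ) - Complex.I * (y:ℂ) = (x:ℂ) - (y:ℂ) * Complex.I from by ring]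
  have d1 : (2 ^ (2 * m + 1) * ((((x:ℂ) + y * Complex.I) * ((x:ℂ) - y * Complex.I)) ^ m
      * (((x:ℂ) + y * Complex.I) * ((x:ℂ) - y * Complex.I))) : ℂ) ≠ 0 := by
    apply mul_ne_zero (pow_ne_zero _ two_ne_zero)
    exact mul_ne_zero (pow_ne_zero _ (mul_ne_zero hZ hW)) (mul_ne_zero hZ hW)
  have d2 : ((2 : ℂ) ^ (2 * m + 1) * ((x:ℂ) + y * Complex.I) ^ (1 + m)
      * ((x:ℂ) - y * Complex.I) ^ m) ≠ 0 :=
    mul_ne_zero (mul_ne_zero (pow_ne_zero _ two_ne_zero) (pow_ne_zero _ hZ)) (pow_ne_zero _ hW)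
  rw [div_eq_div_iff d1 d2]
  rw [mul_pow]
  ring
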